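/- Let M ∈ ℝ^{p×p} be symmetric, let D ∈ ℝ^{p×p} be diagonal with strictly positive diagonal entries, and let k ∈ {1,…,p}. Then ‖DMD − M‖_{k,op} ≤ ‖D − I_p‖_op · ‖M‖_{k,op} · (1 + ‖D‖_op). -/

import Mathlib

open Matrix

/-- The `k`-sparse operator norm of a `p × p` real matrix:
`‖A‖_{k,op} = sup { |vᵀAv| : ‖v‖₂ = 1, ‖v‖₀ ≤ k }`. -/
noncomputable def kSparseOpNorm {p : ℕ} (A : Matrix (Fin p) (Fin p) ℝ) (k : ℕ) : ℝ :=
  sSup {x : ℝ | ∃ v : Fin p → ℝ, (∑ i, v i ^ 2) = 1 ∧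
    (Finset.univ.filter fun i => v i ≠ 0).card ≤ k ∧ x = |v ⬝ᵥ A *ᵥ v|}

/-- The (ℓ₂ → ℓ₂) operator norm of a square real matrix. -/
noncomputable def opNorm {p : ℕ} (A : Matrix (Fin p) (Fin p) ℝ) : ℝ :=
  ‖Matrix.toEuclideanCLM (𝕜 := ℝ) A‖

lemma diag_entry_le {p : ℕ} (c : Fin p → ℝ) (i : Fin p) :
    |c i| ≤ opNorm (Matrix.diagonal c) := by
  have h := (Matrix.toEuclideanCLM (𝕜 := ℝ) (Matrix.diagonal c)).le_opNorm
    (EuclideanSpace.single i (1:ℝ))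
  have he : Matrix.toEuclideanCLM (𝕜 := ℝ) (Matrix.diagonal c) (EuclideanSpace.single i (1:ℝ))
      = EuclideanSpace.single i (c i) := by
    rw [EuclideanSpace.single, PiLp.single, Matrix.toEuclideanCLM_toLp]
    congr 1
    ext j
    simp only [Matrix.toLin'_apply, Matrix.mulVec_single, Pi.smul_apply, Matrix.col_apply, op_smul_eq_mul,
      Matrix.diagonal_apply, Pi.single_apply]
    split
    · next hji => rw [hji]; ring
    · ring
  rw [he, EuclideanSpace.norm_single, EuclideanSpace.norm_single, Real.norm_eq_abs,
    norm_one, mul_one] at h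
  exact h

lemma opNorm_nonneg' {p : ℕ} (A : Matrix (Fin p) (Fin p) ℝ) : 0 ≤ opNorm A :=
  norm_nonneg _

lemma symm_dot {p : ℕ} {M : Matrix (Fin p) (Fin p) ℝ} (hM : M.IsSymm)
    (x y : Fin p → ℝ) : x ⬝ᵥ M *ᵥ y = y ⬝ᵥ M *ᵥ x := by
  rw [Matrix.dotProduct_mulVec, ← Matrix.mulVec_transpose, hM.eq, dotProduct_comm]

lemma kset_bddAbove {p k : ℕ} (A : Matrix (Fin p) (Fin p) ℝ) :
    BddAbove {x : ℝ | ∃ v : Fin p → ℝ, (∑ i, v i ^ 2) = 1 ∧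
      (Finset.univ.filter fun i => v i ≠ 0).card ≤ k ∧ x = |v ⬝ᵥ A *ᵥ v|} := by
  refine ⟨∑ i, ∑ j, |A i j|, ?_⟩
  rintro x ⟨v, hv1, -, rfl⟩
  have habs : ∀ i, |v i| ≤ 1 := by
    intro i
    rw [← sq_le_one_iff_abs_le_one]
    calc v i ^ 2 ≤ ∑ j, v j ^ 2 :=
          Finset.single_le_sum (f := fun j => v j ^ 2) (fun j _ => sq_nonneg _)
            (Finset.mem_univ i)
      _ = 1 := hv1
  calc |v ⬝ᵥ A *ᵥ v| ≤ ∑ i, |v i * (A *ᵥ v) i| := Finset.abs_sum_le_sum_abs _ _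
    _ ≤ ∑ i, ∑ j, |A i j| := by
        refine Finset.sum_le_sum fun i _ => ?_
        rw [abs_mul]
        calc |v i| * |(A *ᵥ v) i| ≤ 1 * |(A *ᵥ v) i| :=
              mul_le_mul_of_nonneg_right (habs i) (abs_nonneg _)
          _ = |∑ j, A i j * v j| := by rw [one_mul]; rfl
          _ ≤ ∑ j, |A i j * v j| := Finset.abs_sum_le_sum_abs _ _
          _ ≤ ∑ j, |A i j| := by
              refine Finset.sum_le_sum fun j _ => ?_
              rw [abs_mul]
              calc |A i j| * |v j| ≤ |A i j| * 1 :=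
                    mul_le_mul_of_nonneg_left (habs j) (abs_nonneg _)
                _ = |A i j| := mul_one _

lemma kSparse_nonneg {p k : ℕ} (A : Matrix (Fin p) (Fin p) ℝ) :
    0 ≤ kSparseOpNorm A k := by
  refine Real.sSup_nonneg fun x hx => ?_
  obtain ⟨v, -, -, rfl⟩ := hx
  exact abs_nonneg _

lemma quad_bound {p k : ℕ} (A : Matrix (Fin p) (Fin p) ℝ) (w : Fin p → ℝ)
    (hw : (Finset.univ.filter fun i => w i ≠ 0).card ≤ k) :
    |w ⬝ᵥ A *ᵥ w| ≤ kSparseOpNorm A k * (∑ i, w i ^ 2) := by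
  set s := ∑ i, w i ^ 2 with hs_def
  have hs0 : 0 ≤ s := Finset.sum_nonneg fun i _ => sq_nonneg _
  rcases eq_or_lt_of_le hs0 with hs | hs
  · -- s = 0, so w = 0
    have hw0 : ∀ i, w i = 0 := by
      intro i
      have := (Finset.sum_eq_zero_iff_of_nonneg (fun j _ => sq_nonneg (w j))).mp hs.symm
        i (Finset.mem_univ i)
      exact pow_eq_zero_iff (by norm_num) |>.mp this
    have : w = 0 := funext hw0
    subst this
    simp [← hs]
  · -- s > 0
    have hsne : Real.sqrt s ≠ 0 := by positivity
    set c := (Real.sqrt s)⁻¹ with hc_def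
    have hcne : c ≠ 0 := inv_ne_zero hsne
    have hc2 : c ^ 2 * s = 1 := by
      rw [hc_def, inv_pow, Real.sq_sqrt hs0]
      exact inv_mul_cancel₀ (ne_of_gt hs)
    set v := c • w with hv_def
    have hv1 : (∑ i, v i ^ 2) = 1 := by
      have : ∑ i, v i ^ 2 = c ^ 2 * s := by
        rw [hs_def, Finset.mul_sum]
        exact Finset.sum_congr rfl fun i _ => by simp [hv_def]; ring
      rw [this, hc2]
    have hvk : (Finset.univ.filter fun i => v i ≠ 0).card ≤ k := by
      have : (Finset.univ.filter fun i => v i ≠ 0) =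
          (Finset.univ.filter fun i => w i ≠ 0) := by
        refine Finset.filter_congr fun i _ => ?_
        simp [hv_def, hcne]
      rw [this]; exact hw
    have hmem : |v ⬝ᵥ A *ᵥ v| ∈ {x : ℝ | ∃ v : Fin p → ℝ, (∑ i, v i ^ 2) = 1 ∧
        (Finset.univ.filter fun i => v i ≠ 0).card ≤ k ∧ x = |v ⬝ᵥ A *ᵥ v|} :=
      ⟨v, hv1, hvk, rfl⟩
    have hle : |v ⬝ᵥ A *ᵥ v| ≤ kSparseOpNorm A k :=
      le_csSup (kset_bddAbove A) hmem
    have hvq : v ⬝ᵥ A *ᵥ v = c ^ 2 * (w ⬝ᵥ A *ᵥ w) := by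
      rw [hv_def, Matrix.mulVec_smul, dotProduct_smul, smul_dotProduct]
      simp [smul_eq_mul]; ring
    rw [hvq, abs_mul, abs_of_nonneg (sq_nonneg c)] at hle
    calc |w ⬝ᵥ A *ᵥ w| = s * (c ^ 2 * |w ⬝ᵥ A *ᵥ w|) := by
          rw [← mul_assoc, mul_comm s, hc2, one_mul]
      _ ≤ s * kSparseOpNorm A k := mul_le_mul_of_nonneg_left hle hs0
      _ = kSparseOpNorm A k * s := mul_comm _ _

lemma parallelogram {p : ℕ} (a b : Fin p → ℝ) :
    (∑ i, (a i + b i) ^ 2) + (∑ i, (a i - b i) ^ 2)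
      = 2 * (∑ i, a i ^ 2) + 2 * (∑ i, b i ^ 2) := by
  rw [← Finset.sum_add_distrib, Finset.mul_sum, Finset.mul_sum, ← Finset.sum_add_distrib]
  exact Finset.sum_congr rfl fun i _ => by ring

lemma bilin_bound {p k : ℕ} {M : Matrix (Fin p) (Fin p) ℝ} (hM : M.IsSymm)
    (v a b : Fin p → ℝ)
    (hvk : (Finset.univ.filter fun i => v i ≠ 0).card ≤ k)
    (ha : ∀ i, v i = 0 → a i = 0) (hb : ∀ i, v i = 0 → b i = 0) :
    |a ⬝ᵥ M *ᵥ b| ≤ kSparseOpNorm M k *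
      Real.sqrt (∑ i, a i ^ 2) * Real.sqrt (∑ i, b i ^ 2) := by
  set K := kSparseOpNorm M k with hK
  have hK0 : 0 ≤ K := kSparse_nonneg M
  have supp_card : ∀ (x : Fin p → ℝ), (∀ i, v i = 0 → x i = 0) →
      (Finset.univ.filter fun i => x i ≠ 0).card ≤ k := by
    intro x hx
    refine le_trans (Finset.card_le_card ?_) hvk
    intro i hi
    simp only [Finset.mem_filter, Finset.mem_univ, true_and] at hi ⊢
    exact fun h => hi (hx i h)
  have hSA0 : 0 ≤ ∑ i, a i ^ 2 := Finset.sum_nonneg fun i _ => sq_nonneg _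
  have hSB0 : 0 ≤ ∑ i, b i ^ 2 := Finset.sum_nonneg fun i _ => sq_nonneg _
  rcases eq_or_lt_of_le hSA0 with hA | hA
  · have ha0 : a = 0 := funext fun i => by
      have := (Finset.sum_eq_zero_iff_of_nonneg (fun j _ => sq_nonneg (a j))).mp hA.symm
        i (Finset.mem_univ i)
      exact pow_eq_zero_iff (two_ne_zero) |>.mp this
    subst ha0
    simp only [zero_dotProduct, abs_zero]
    positivity
  rcases eq_or_lt_of_le hSB0 with hB | hB
  · have hb0 : b = 0 := funext fun i => by
      have := (Finset.sum_eq_zero_iff_of_nonneg (fun j _ => sq_nonneg (b j))).mp hB.symm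
        i (Finset.mem_univ i)
      exact pow_eq_zero_iff (two_ne_zero) |>.mp this
    subst hb0
    simp only [Matrix.mulVec_zero, dotProduct_zero, abs_zero]
    positivity
  have hsa : (0:ℝ) < Real.sqrt (∑ i, a i ^ 2) := Real.sqrt_pos.mpr hA
  have hsb : (0:ℝ) < Real.sqrt (∑ i, b i ^ 2) := Real.sqrt_pos.mpr hB
  have hssa : Real.sqrt (∑ i, a i ^ 2) * Real.sqrt (∑ i, a i ^ 2) = ∑ i, a i ^ 2 :=
    Real.mul_self_sqrt hSA0
  have hssb : Real.sqrt (∑ i, b i ^ 2) * Real.sqrt (∑ i, b i ^ 2) = ∑ i, b i ^ 2 :=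
    Real.mul_self_sqrt hSB0
  set t := Real.sqrt (Real.sqrt (∑ i, b i ^ 2) / Real.sqrt (∑ i, a i ^ 2)) with ht_def
  have ht : 0 < t := Real.sqrt_pos.mpr (by positivity)
  have ht2 : t ^ 2 = Real.sqrt (∑ i, b i ^ 2) / Real.sqrt (∑ i, a i ^ 2) :=
    Real.sq_sqrt (by positivity)
  set a' : Fin p → ℝ := fun i => t * a i with ha'
  set b' : Fin p → ℝ := fun i => t⁻¹ * b i with hb'
  have hSA' : (∑ i, a' i ^ 2)
      = Real.sqrt (∑ i, a i ^ 2) * Real.sqrt (∑ i, b i ^ 2) := by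
    have h1 : (∑ i, a' i ^ 2) = t ^ 2 * ∑ i, a i ^ 2 := by
      rw [Finset.mul_sum]; exact Finset.sum_congr rfl fun i _ => by rw [ha']; ring
    rw [h1, ht2, div_mul_eq_mul_div, div_eq_iff hsa.ne']
    linear_combination (-Real.sqrt (∑ i, b i ^ 2)) * hssa
  have hSB' : (∑ i, b' i ^ 2)
      = Real.sqrt (∑ i, a i ^ 2) * Real.sqrt (∑ i, b i ^ 2) := by
    have h1 : (∑ i, b' i ^ 2) = (t ^ 2)⁻¹ * ∑ i, b i ^ 2 := by
      rw [Finset.mul_sum]; exact Finset.sum_congr rfl fun i _ => by rw [hb']; ring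
    rw [h1, ht2, inv_div, div_mul_eq_mul_div, div_eq_iff hsb.ne']
    linear_combination (-Real.sqrt (∑ i, a i ^ 2)) * hssb
  have hdot : a' ⬝ᵥ M *ᵥ b' = a ⬝ᵥ M *ᵥ b := by
    have h1 : a' = t • a := rfl
    have h2 : b' = t⁻¹ • b := rfl
    rw [h1, h2, Matrix.mulVec_smul, dotProduct_smul, smul_dotProduct, smul_eq_mul,
      smul_eq_mul, ← mul_assoc, inv_mul_cancel₀ (ne_of_gt ht), one_mul]
  set c : Fin p → ℝ := fun i => a' i + b' i with hc
  set e : Fin p → ℝ := fun i => a' i - b' i with he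
  have hceq : c = a' + b' := rfl
  have heeq : e = a' - b' := rfl
  have hpol : (c ⬝ᵥ M *ᵥ c) - (e ⬝ᵥ M *ᵥ e) = 4 * (a' ⬝ᵥ M *ᵥ b') := by
    rw [hceq, heeq]
    simp only [Matrix.mulVec_add, Matrix.mulVec_sub, dotProduct_add, dotProduct_sub,
      add_dotProduct, sub_dotProduct]
    rw [symm_dot hM b' a']
    ring
  have hQpb : |c ⬝ᵥ M *ᵥ c| ≤ K * (∑ i, c i ^ 2) :=
    quad_bound M c (supp_card _ fun i hi => by
      simp [hc, ha', hb', ha i hi, hb i hi])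
  have hQmb : |e ⬝ᵥ M *ᵥ e| ≤ K * (∑ i, e i ^ 2) :=
    quad_bound M e (supp_card _ fun i hi => by
      simp [he, ha', hb', ha i hi, hb i hi])
  have hsum4 : (∑ i, c i ^ 2) + (∑ i, e i ^ 2)
      = 4 * (Real.sqrt (∑ i, a i ^ 2) * Real.sqrt (∑ i, b i ^ 2)) := by
    have hpar := parallelogram a' b'
    have h1 : (∑ i, c i ^ 2) = ∑ i, (a' i + b' i) ^ 2 := rfl
    have h2 : (∑ i, e i ^ 2) = ∑ i, (a' i - b' i) ^ 2 := rfl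
    rw [h1, h2, hpar, hSA', hSB']
    ring
  have habs : |(c ⬝ᵥ M *ᵥ c) - (e ⬝ᵥ M *ᵥ e)| ≤ |c ⬝ᵥ M *ᵥ c| + |e ⬝ᵥ M *ᵥ e| :=
    abs_sub _ _
  have h4 : 4 * |a' ⬝ᵥ M *ᵥ b'| = |(c ⬝ᵥ M *ᵥ c) - (e ⬝ᵥ M *ᵥ e)| := by
    rw [hpol, abs_mul]
    norm_num
  have hmulsum : K * (∑ i, c i ^ 2) + K * (∑ i, e i ^ 2)
      = 4 * (K * (Real.sqrt (∑ i, a i ^ 2) * Real.sqrt (∑ i, b i ^ 2))) := by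
    rw [← mul_add, hsum4]
    ring
  have key : |a ⬝ᵥ M *ᵥ b|
      ≤ K * (Real.sqrt (∑ i, a i ^ 2) * Real.sqrt (∑ i, b i ^ 2)) := by
    rw [← hdot]
    linarith [h4, habs, hQpb, hQmb, hmulsum]
  calc |a ⬝ᵥ M *ᵥ b|
      ≤ K * (Real.sqrt (∑ i, a i ^ 2) * Real.sqrt (∑ i, b i ^ 2)) := key
    _ = K * Real.sqrt (∑ i, a i ^ 2) * Real.sqrt (∑ i, b i ^ 2) := by ring

/-- perturbation bound for symmetric matrices conjugated by a positive
diagonal matrix, in `k`-sparse operator norm. -/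
theorem stmt_4 {p k : ℕ} (hk1 : 1 ≤ k) (hkp : k ≤ p)
    (M : Matrix (Fin p) (Fin p) ℝ) (hM : M.IsSymm)
    (d : Fin p → ℝ) (hd : ∀ i, 0 < d i) :
    kSparseOpNorm (Matrix.diagonal d * M * Matrix.diagonal d - M) k ≤
      opNorm (Matrix.diagonal d - 1) * kSparseOpNorm M k *
        (1 + opNorm (Matrix.diagonal d)) := by
  have hKn : 0 ≤ kSparseOpNorm M k := kSparse_nonneg M
  have hN10 : 0 ≤ opNorm (Matrix.diagonal d - 1) := opNorm_nonneg' _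
  have hN20 : 0 ≤ opNorm (Matrix.diagonal d) := opNorm_nonneg' _
  have hdiag1 : Matrix.diagonal d - 1 = Matrix.diagonal (fun i => d i - 1) := by
    rw [← Matrix.diagonal_one, Matrix.diagonal_sub]
  have hentry1 : ∀ i, |d i - 1| ≤ opNorm (Matrix.diagonal d - 1) := fun i => by
    rw [hdiag1]; exact diag_entry_le (fun j => d j - 1) i
  have hentry2 : ∀ i, |d i + 1| ≤ 1 + opNorm (Matrix.diagonal d) := fun i => by
    calc |d i + 1| ≤ |d i| + |(1:ℝ)| := abs_add_le _ _
      _ ≤ opNorm (Matrix.diagonal d) + 1 := by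
          have := diag_entry_le d i
          simp only [abs_one]
          linarith
      _ = 1 + opNorm (Matrix.diagonal d) := add_comm _ _
  refine Real.sSup_le ?_
    (mul_nonneg (mul_nonneg hN10 hKn) (by linarith))
  rintro x ⟨v, hv1, hvk, rfl⟩
  set a : Fin p → ℝ := fun i => (d i - 1) * v i with haDef
  set bb : Fin p → ℝ := fun i => (d i + 1) * v i with hbDef
  set u : Fin p → ℝ := fun i => d i * v i with huDef
  have hvd : ∀ y : Fin p → ℝ, v ⬝ᵥ (Matrix.diagonal d *ᵥ y) = u ⬝ᵥ y := fun y => by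
    simp only [dotProduct, Matrix.mulVec_diagonal, huDef]
    exact Finset.sum_congr rfl fun i _ => by ring
  have hDv : Matrix.diagonal d *ᵥ v = u := by
    ext i; rw [Matrix.mulVec_diagonal]
  have hstep1 : v ⬝ᵥ (Matrix.diagonal d * M * Matrix.diagonal d) *ᵥ v = u ⬝ᵥ M *ᵥ u := by
    rw [← Matrix.mulVec_mulVec, ← Matrix.mulVec_mulVec, hDv, hvd]
  have h3 : a ⬝ᵥ M *ᵥ bb = u ⬝ᵥ M *ᵥ u - v ⬝ᵥ M *ᵥ v := by
    have ha' : a = u - v := funext fun i => by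
      simp only [haDef, huDef, Pi.sub_apply]; ring
    have hb' : bb = u + v := funext fun i => by
      simp only [hbDef, huDef, Pi.add_apply]; ring
    rw [ha', hb', Matrix.mulVec_add, dotProduct_add, sub_dotProduct, sub_dotProduct,
      symm_dot hM v u]
    ring
  have hid : v ⬝ᵥ (Matrix.diagonal d * M * Matrix.diagonal d - M) *ᵥ v = a ⬝ᵥ M *ᵥ bb := by
    rw [Matrix.sub_mulVec, dotProduct_sub, hstep1, h3]
  have hbound : ∀ (c : Fin p → ℝ) (N : ℝ), 0 ≤ N → (∀ i, |c i| ≤ N) →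
      Real.sqrt (∑ i, (c i * v i) ^ 2) ≤ N := by
    intro c N hN0 hc
    have hsum : (∑ i, (c i * v i) ^ 2) ≤ N ^ 2 := by
      calc (∑ i, (c i * v i) ^ 2) ≤ ∑ i, N ^ 2 * v i ^ 2 := by
            refine Finset.sum_le_sum fun i _ => ?_
            have h1 : c i ^ 2 ≤ N ^ 2 := by
              rw [← sq_abs]; exact pow_le_pow_left₀ (abs_nonneg _) (hc i) 2
            calc (c i * v i) ^ 2 = c i ^ 2 * v i ^ 2 := by ring
              _ ≤ N ^ 2 * v i ^ 2 := mul_le_mul_of_nonneg_right h1 (sq_nonneg _)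
        _ = N ^ 2 := by rw [← Finset.mul_sum, hv1, mul_one]
    calc Real.sqrt (∑ i, (c i * v i) ^ 2) ≤ Real.sqrt (N ^ 2) := Real.sqrt_le_sqrt hsum
      _ = N := Real.sqrt_sq hN0
  have hsa : Real.sqrt (∑ i, a i ^ 2) ≤ opNorm (Matrix.diagonal d - 1) :=
    hbound (fun i => d i - 1) _ hN10 hentry1
  have hsb : Real.sqrt (∑ i, bb i ^ 2) ≤ 1 + opNorm (Matrix.diagonal d) :=
    hbound (fun i => d i + 1) _ (by linarith) hentry2
  have ha_supp : ∀ i, v i = 0 → a i = 0 := fun i h => by simp [haDef, h]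
  have hb_supp : ∀ i, v i = 0 → bb i = 0 := fun i h => by simp [hbDef, h]
  have hbil := bilin_bound hM v a bb hvk ha_supp hb_supp
  rw [hid]
  calc |a ⬝ᵥ M *ᵥ bb|
      ≤ kSparseOpNorm M k * Real.sqrt (∑ i, a i ^ 2) * Real.sqrt (∑ i, bb i ^ 2) := hbil
    _ ≤ kSparseOpNorm M k * opNorm (Matrix.diagonal d - 1) * Real.sqrt (∑ i, bb i ^ 2) :=
        mul_le_mul_of_nonneg_right (mul_le_mul_of_nonneg_left hsa hKn) (Real.sqrt_nonneg _)
    _ ≤ kSparseOpNorm M k * opNorm (Matrix.diagonal d - 1) *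
          (1 + opNorm (Matrix.diagonal d)) :=
        mul_le_mul_of_nonneg_left hsb (mul_nonneg hKn hN10)
    _ = opNorm (Matrix.diagonal d - 1) * kSparseOpNorm M k *
          (1 + opNorm (Matrix.diagonal d)) := by ring
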